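/- Let X be a paracompact Hausdorff space, Y a topological vector space, and T : X → Set Y a lower semicontinuous multifunction with nonempty convex values (T need not have closed values). If the fibers need not be open, suppose only lower semicontinuity; then for every convex open neighborhood U of 0 in Y there exists a continuous map g : X → Y such that g(x) ∈ T(x) + U for all x ∈ X. -/

import Mathlib

open Pointwise

/-- Almost selection for lower semicontinuous maps: for every convex open
neighborhood `U` of `0` there is a continuous `U`-almost selection. -/
theorem lsc_almost_selection
    {X : Type*} [TopologicalSpace X] [ParacompactSpace X] [T2Space X]
    {Y : Type*} [AddCommGroup Y] [Module ℝ Y] [TopologicalSpace Y]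
    [IsTopologicalAddGroup Y] [ContinuousSMul ℝ Y]
    (T : X → Set Y)
    (hlsc : ∀ V : Set Y, IsOpen V → IsOpen {x : X | (T x ∩ V).Nonempty})
    (hne : ∀ x, (T x).Nonempty)
    (hconv : ∀ x, Convex ℝ (T x))
    (U : Set Y) (hUopen : IsOpen U) (hUconv : Convex ℝ U) (hU0 : (0 : Y) ∈ U) :
    ∃ g : X → Y, Continuous g ∧ ∀ x, g x ∈ T x + U := by
  have key : ∀ (y : Y) (x : X), y ∈ T x + U ↔ (T x ∩ ((fun z => y - z) ⁻¹' U)).Nonempty := by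
    intro y x
    constructor
    · rintro ⟨t, ht, u, hu, rfl⟩
      exact ⟨t, ht, by simpa using hu⟩
    · rintro ⟨t, ht, hu⟩
      exact ⟨t, ht, y - t, hu, add_sub_cancel t y⟩
  have H : ∀ x : X, ∃ W ∈ nhds x, ∃ g : X → Y,
      ContinuousOn g W ∧ ∀ x' ∈ W, g x' ∈ T x' + U := by
    intro x
    obtain ⟨y, hy⟩ := hne x
    refine ⟨{x' | (T x' ∩ ((fun z => y - z) ⁻¹' U)).Nonempty}, ?_, fun _ => y,
      continuousOn_const, fun x' hx' => (key y x').2 hx'⟩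
    refine (hlsc _ ?_).mem_nhds ?_
    · exact hUopen.preimage (by continuity)
    · exact (key y x).1 ⟨y, hy, 0, hU0, add_zero y⟩
  obtain ⟨g, hg⟩ := exists_continuous_forall_mem_convex_of_local
    (t := fun x => T x + U) (fun x => (hconv x).add hUconv) H
  exact ⟨g, g.continuous, hg⟩
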